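/- Let τ_n > 0 be a monotonically increasing sequence, let 𝔔 be a class of joint distributions Q of (X,Y) on ℝ^d × {0,1}, and for each n let N_n be a finite collection of subsets of ℝ^d such that: (i) for all Q ∈ 𝔔, every G ∈ ⋃_n N_n and the Bayes rule G*_Q are Q-measurable; (ii) there exist κ ≥ 1 and c₁ > 0 with d_{f_Q}(G, G*_Q) ≥ c₁ · d_Δ(G, G*_Q)^κ for all G ∈ ⋃_n N_n and all Q ∈ 𝔔; (iii) there exist N₀ ∈ ℕ and c₂ > 0 such that for all n ≥ N₀ and every Q ∈ 𝔔 there is G ∈ N_n with d_{f_Q}(G, G*_Q) ≤ c₂ τ_n^{-κ}; (iv) there exist c₃, ρ > 0 such that log|N_n| ≤ c₃ n^{ρ/(ρ+2κ−1)} for all n ≥ N₀. Then for every p ≥ 1, with τ̃_n := min{τ_n, n^{1/(ρ+2κ−1)}}, both limsup_{n→∞} sup_{Q∈𝔔} τ̃_n^{κp} · E[d_{f_Q}^p(Ĝ_n, G*_Q)] < ∞ and limsup_{n→∞} sup_{Q∈𝔔} τ̃_n^{p} · E[d_Δ^p(Ĝ_n, G*_Q)] < ∞ hold, where Ĝ_n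 is any empirical risk minimizer over N_n based on n i.i.d. observations from Q. -/

import Mathlib

open MeasureTheory

/-! ## Classification models -/

/-- A joint distribution `Q` of `(X,Y)` on `ℝ^d × {0,1}`, encoded by the marginal
distribution `μ` of `X` together with the regression function `f x = Q(Y = 1 ∣ X = x)`. -/
structure ClsModel (d : ℕ) where
  μ : Measure (Fin d → ℝ)
  prob : IsProbabilityMeasure μ
  f : (Fin d → ℝ) → ℝ
  f_meas : Measurable f
  f_nonneg : ∀ x, 0 ≤ f x
  f_le_one : ∀ x, f x ≤ 1

/-- The joint distribution of `(X,Y)` on `(ℝ^d) × Bool` determined by a model. -/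
noncomputable def ClsModel.joint {d : ℕ} (Q : ClsModel d) :
    Measure ((Fin d → ℝ) × Bool) :=
  Q.μ.bind fun x =>
    ENNReal.ofReal (Q.f x) • Measure.dirac (x, true)
      + ENNReal.ofReal (1 - Q.f x) • Measure.dirac (x, false)

/-- The distribution of `n` i.i.d. samples from `Q`. -/
noncomputable def ClsModel.samples {d : ℕ} (Q : ClsModel d) (n : ℕ) :
    Measure (Fin n → (Fin d → ℝ) × Bool) :=
  Measure.pi fun _ => Q.joint

/-- `d_{f_Q}(G₁,G₂) = ∫_{G₁ Δ G₂} |2 f_Q - 1| dQ_X`. -/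
noncomputable def ClsModel.dF {d : ℕ} (Q : ClsModel d) (G₁ G₂ : Set (Fin d → ℝ)) : ℝ :=
  ∫ x in symmDiff G₁ G₂, |2 * Q.f x - 1| ∂Q.μ

/-- `d_Δ(G₁,G₂) = Q_X(G₁ Δ G₂)`. -/
noncomputable def ClsModel.dDel {d : ℕ} (Q : ClsModel d) (G₁ G₂ : Set (Fin d → ℝ)) : ℝ :=
  (Q.μ (symmDiff G₁ G₂)).toReal

/-- The Bayes rule `G*_Q = {x ∣ f_Q(x) ≥ 1/2}`. -/
def ClsModel.bayes {d : ℕ} (Q : ClsModel d) : Set (Fin d → ℝ) := {x | 1/2 ≤ Q.f x}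

open Classical in
/-- The empirical misclassification error `R_n(G)` of a set `G` for data `ω`. -/
noncomputable def empRisk {d n : ℕ} (ω : Fin n → (Fin d → ℝ) × Bool)
    (G : Set (Fin d → ℝ)) : ℝ :=
  (n : ℝ)⁻¹ * ∑ i : Fin n, if ((ω i).1 ∈ G ↔ (ω i).2 = true) then 0 else 1

/-- `Ghat` is an empirical risk minimizer over the collection `𝒩`. -/
def isERM {d n : ℕ} (𝒩 : Set (Set (Fin d → ℝ)))
    (Ghat : (Fin n → (Fin d → ℝ) × Bool) → Set (Fin d → ℝ)) : Prop :=
  ∀ ω, Ghat ω ∈ 𝒩 ∧ ∀ G ∈ 𝒩, empRisk ω (Ghat ω) ≤ empRisk ω G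

/-- The expected `p`-th power of the distance between an estimator `Ghat` (a function of
`n` i.i.d. samples from `Q`) and the Bayes rule, for a distance `dist`. -/
noncomputable def clsRisk {d : ℕ} (Q : ClsModel d) (n : ℕ)
    (Ghat : (Fin n → (Fin d → ℝ) × Bool) → Set (Fin d → ℝ))
    (dist : ClsModel d → Set (Fin d → ℝ) → Set (Fin d → ℝ) → ℝ) (p : ℝ) : ℝ :=
  ∫ ω, dist Q (Ghat ω) Q.bayes ^ p ∂Q.samples n

/-! ## ReLU Neural networks -/

/-- A feedforward ReLU neural network with `L` hidden layers: `dims k` is the width of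
layer `k` (`dims 0` the input dimension, `dims (L+1)` the output dimension),
`W k` is the weight matrix mapping layer `k` to layer `k+1` (the paper's `W_{k+1}`),
and `b k` is the shift vector of hidden layer `k+1` (the paper's `b_{k+1}`).
Entries outside the relevant ranges are zero. -/
structure Net where
  L : ℕ
  dims : ℕ → ℕ
  W : ℕ → ℕ → ℕ → ℝ
  b : ℕ → ℕ → ℝ
  W_zero : ∀ k i j, L + 1 ≤ k ∨ dims (k+1) ≤ i ∨ dims k ≤ j → W k i j = 0
  b_zero : ∀ k j, L ≤ k ∨ dims (k+1) ≤ j → b k j = 0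

/-- The hidden state of layer `k` : `h_0 = x` (truncated to the input coordinates), and
`h_{k+1} = σ_{b_{k+1}}(W_{k+1} h_k)` (coordinatewise shifted ReLU). -/
noncomputable def Net.hidden (Φ : Net) : ℕ → (ℕ → ℝ) → ℕ → ℝ
  | 0, x, j => if j < Φ.dims 0 then x j else 0
  | k+1, x, j =>
    if j < Φ.dims (k+1) then
      max ((∑ i ∈ Finset.range (Φ.dims k), Φ.W k j i * Net.hidden Φ k x i) - Φ.b k j) 0
    else 0

/-- The output `W_{L+1} σ_{b_L} W_L ⋯ σ_{b_1} W_1 x` of the network. -/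
noncomputable def Net.out (Φ : Net) (x : ℕ → ℝ) : ℕ → ℝ :=
  fun j =>
    if j < Φ.dims (Φ.L + 1) then
      ∑ i ∈ Finset.range (Φ.dims Φ.L), Φ.W Φ.L j i * Net.hidden Φ Φ.L x i
    else 0

/-- The realization of the network as a map `ℝ^{din} → ℝ^{dout}`. -/
noncomputable def Net.realizeV (Φ : Net) (din dout : ℕ) (x : Fin din → ℝ) :
    Fin dout → ℝ :=
  fun j => Φ.out (fun i => if h : i < din then x ⟨i, h⟩ else 0) j

/-- The realization of a network with one-dimensional output, as a map `ℝ^{din} → ℝ`. -/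
noncomputable def Net.realize (Φ : Net) (din : ℕ) (x : Fin din → ℝ) : ℝ :=
  Φ.out (fun i => if h : i < din then x ⟨i, h⟩ else 0) 0

open Classical in
/-- The sparsity of a network: the total number of nonzero entries of the weight
matrices `W_1, …, W_{L+1}` and the shift vectors `b_1, …, b_L`. -/
noncomputable def Net.sparsity (Φ : Net) : ℕ :=
  (∑ k ∈ Finset.range (Φ.L + 1), ∑ i ∈ Finset.range (Φ.dims (k+1)),
      ((Finset.range (Φ.dims k)).filter fun j => Φ.W k i j ≠ 0).card)
    + ∑ k ∈ Finset.range Φ.L,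
        ((Finset.range (Φ.dims (k+1))).filter fun j => Φ.b k j ≠ 0).card

/-- The weight grid `W_c = {k 2^{-c} : k ∈ ℤ, |k| ≤ 2^c}`. -/
def Wgrid (c : ℕ) : Set ℝ :=
  {w | ∃ k : ℤ, |k| ≤ 2 ^ c ∧ w = (k : ℝ) * (2 : ℝ) ^ (-(c : ℤ))}

/-- All weights (matrix entries and shifts) of `Φ` belong to the grid `W_c`. -/
def Net.weightsIn (Φ : Net) (c : ℕ) : Prop :=
  (∀ k i j, Φ.W k i j ∈ Wgrid c) ∧ ∀ k j, Φ.b k j ∈ Wgrid c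

/-- The class `N_{L₀,s₀,c}` of subsets of `[0,1]^d` of the form `R(Φ)^{-1}(1)` for ReLU
networks with input dimension `d`, one-dimensional output, at most `L₀` layers,
sparsity at most `s₀` and weights in `W_c`. -/
def NNclass (d : ℕ) (L₀ s₀ : ℝ) (c : ℕ) : Set (Set (Fin d → ℝ)) :=
  {G | ∃ Φ : Net, Φ.dims 0 = d ∧ Φ.dims (Φ.L + 1) = 1 ∧
    (Φ.L : ℝ) ≤ L₀ ∧ (Φ.sparsity : ℝ) ≤ s₀ ∧ Φ.weightsIn c ∧
    G = {x : Fin d → ℝ | x ∈ Set.Icc 0 1 ∧ Φ.realize d x = 1}}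

/-- The class of subsets of `[0,1]^d` corresponding to arbitrary ReLU networks. -/
def allNNsets (d : ℕ) : Set (Set (Fin d → ℝ)) :=
  {G | ∃ Φ : Net, Φ.dims 0 = d ∧ Φ.dims (Φ.L + 1) = 1 ∧
    G = {x : Fin d → ℝ | x ∈ Set.Icc 0 1 ∧ Φ.realize d x = 1}}

/-! ## Hölder classes -/

/-- The unit cube `[0,1]^s`. -/
def cube (s : ℕ) : Set (Fin s → ℝ) := Set.Icc 0 1

/-- Partial derivative in coordinate direction `i` (within the cube). -/
noncomputable def pderiv' {s : ℕ} (i : Fin s) (f : (Fin s → ℝ) → ℝ) :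
    (Fin s → ℝ) → ℝ :=
  fun x => fderivWithin ℝ f (cube s) x (Pi.single i 1)

/-- The mixed partial derivative `∂^α f` for a multi-index `α`. -/
noncomputable def mderiv {s : ℕ} (α : Fin s → ℕ) (f : (Fin s → ℝ) → ℝ) :
    (Fin s → ℝ) → ℝ :=
  (List.finRange s).foldr (fun i g => (pderiv' i)^[α i] g) f

/-- `m = max {k ∈ ℕ ∣ k < β}` for `β > 0`. -/
noncomputable def holm (β : ℝ) : ℕ := ⌈β⌉₊ - 1

/-- The multi-indices `α` with `|α| ≤ m`. -/
def MIdxLe (s m : ℕ) : Finset (Fin s → ℕ) :=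
  (Fintype.piFinset fun _ : Fin s => Finset.range (m+1)).filter fun α => (∑ i, α i) ≤ m

/-- The multi-indices `α` with `|α| = m`. -/
def MIdxEq (s m : ℕ) : Finset (Fin s → ℕ) :=
  (Fintype.piFinset fun _ : Fin s => Finset.range (m+1)).filter fun α => (∑ i, α i) = m

/-- The Hölder ball `F_{β,B,s}`: continuous functions on `[0,1]^s` whose Hölder norm
`Σ_{|α|≤m} ‖∂^α f‖_∞ + Σ_{|α|=m} sup_{x≠y} |∂^α f(x)-∂^α f(y)|/‖x-y‖_∞^{β-m}`
is at most `B` (expressed via existence of per-term bounds summing to at most `B`). -/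
def HolderBall (β B : ℝ) (s : ℕ) : Set ((Fin s → ℝ) → ℝ) :=
  {f | ContinuousOn f (cube s) ∧
    ∃ sb : (Fin s → ℕ) → ℝ, ∃ hb : (Fin s → ℕ) → ℝ,
      (∀ α ∈ MIdxLe s (holm β), ∀ x ∈ cube s, |mderiv α f x| ≤ sb α) ∧
      (∀ α ∈ MIdxEq s (holm β), ∀ x ∈ cube s, ∀ y ∈ cube s, x ≠ y →
        |mderiv α f x - mderiv α f y| ≤ hb α * ‖x - y‖ ^ (β - holm β)) ∧
      (∑ α ∈ MIdxLe s (holm β), sb α) + ∑ α ∈ MIdxEq s (holm β), hb α ≤ B}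

/-- The one-dimensional Hölder ball `F_{β,B,1}` of functions on `[0,1]`. -/
def Holder1 (β B : ℝ) : Set (ℝ → ℝ) :=
  {g | ContinuousOn g (Set.Icc 0 1) ∧
    ∃ sb : ℕ → ℝ, ∃ hb : ℝ,
      (∀ k ≤ holm β, ∀ x ∈ Set.Icc (0:ℝ) 1,
        |iteratedDerivWithin k g (Set.Icc 0 1) x| ≤ sb k) ∧
      (∀ x ∈ Set.Icc (0:ℝ) 1, ∀ y ∈ Set.Icc (0:ℝ) 1, x ≠ y →
        |iteratedDerivWithin (holm β) g (Set.Icc 0 1) x -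
            iteratedDerivWithin (holm β) g (Set.Icc 0 1) y| ≤
          hb * |x - y| ^ (β - holm β)) ∧
      (∑ k ∈ Finset.range (holm β + 1), sb k) + hb ≤ B}

/-- The class `H_{β,B}` of Hölder functions whose derivatives vanish at `0` up to
order `m` (equivalently, for all integer orders `< β`). -/
def Hclass (β B : ℝ) : Set (ℝ → ℝ) :=
  {g | g ∈ Holder1 β B ∧ ∀ k ≤ holm β, iteratedDerivWithin k g (Set.Icc 0 1) 0 = 0}

/-! ## Boundary-fragment classes -/

/-- Remove the `j`-th coordinate: `x ↦ x_{-j}`. -/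
def rmCoord {d : ℕ} (j : Fin d) (x : Fin d → ℝ) : Fin (d-1) → ℝ :=
  fun i =>
    if h : (i : ℕ) < (j : ℕ) then x ⟨i, by have := i.isLt; omega⟩
    else x ⟨(i : ℕ) + 1, by have := i.isLt; omega⟩

/-- Membership of a set `H ⊆ [0,1]^d` in the class `K^F_{Q,β,B,ε₁,ε₂,r,d}`. -/
def memK (d : ℕ) (Q : ClsModel d) (F : Set ((Fin (d-1) → ℝ) → ℝ))
    (β B ε₁ ε₂ : ℝ) (r : ℕ) (H : Set (Fin d → ℝ)) : Prop :=
  ∃ u : ℕ, u ≤ r ∧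
  ∃ (jj : Fin u → Fin d) (ι : Fin u → ℝ) (γ : Fin u → (Fin (d-1) → ℝ) → ℝ)
    (a bb : Fin u → Fin d → ℝ),
    (∀ ν, ι ν = 1 ∨ ι ν = -1) ∧
    (∀ ν, γ ν ∈ F) ∧
    (∀ ν i, 0 ≤ a ν i ∧ a ν i < bb ν i ∧ bb ν i ≤ 1) ∧
    H = (⋃ ν, Set.Icc (a ν) (bb ν) ∩ {x | ι ν * x (jj ν) ≤ γ ν (rmCoord (jj ν) x)}) ∧
    (∀ ν₁ ν₂, ν₁ ≠ ν₂ →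
      volume (Set.Icc (a ν₁) (bb ν₁) ∩ Set.Icc (a ν₂) (bb ν₂)) = 0) ∧
    (∀ ν, ε₂ ≤ bb ν (jj ν) - a ν (jj ν)) ∧
    (0 < β → ∀ ν, ∀ x ∈ Set.Icc (a ν) (bb ν) ∩ frontier H,
      ∃ g ∈ Hclass β B, ∀ y : ℝ,
        max 0 (x (jj ν) - ε₁) ≤ y → y ≤ min 1 (x (jj ν) + ε₁) →
          |2 * Q.f (Function.update x (jj ν) y) - 1| ≤ g |y - x (jj ν)|)

/-! ## Composition classes -/

/-- Evaluate a chain of maps `g 0, g 1, …` up to stage `k`. -/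
noncomputable def chainEval (dd : ℕ → ℕ)
    (g : ∀ i : ℕ, (Fin (dd i) → ℝ) → (Fin (dd (i+1)) → ℝ)) :
    (k : ℕ) → (Fin (dd 0) → ℝ) → (Fin (dd k) → ℝ)
  | 0 => fun x => x
  | k+1 => fun x => g k (chainEval dd g k x)

/-- Membership in the composition class `G_{r,t,β,B,d}`: `γ = γ_r ∘ ⋯ ∘ γ_1`, each
component of `γ_i` being a Hölder function of `t_i` of the variables (here `0`-indexed:
`g i`, `t i`, `β i` and `dd i` correspond to the paper's `γ_{i+1}`, `t_{i+1}`,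
`β_{i+1}` and `d_{i+1}`). -/
def memComp (r : ℕ) (t : ℕ → ℕ) (dd : ℕ → ℕ) (β : ℕ → ℝ) (B : ℝ)
    (γ : (Fin (dd 0) → ℝ) → ℝ) : Prop :=
  ∃ g : ∀ i : ℕ, (Fin (dd i) → ℝ) → (Fin (dd (i+1)) → ℝ),
    (∀ i < r, ∀ j : Fin (dd (i+1)),
      ∃ γij : (Fin (t i) → ℝ) → ℝ, ∃ sel : Fin (t i) → Fin (dd i),
        γij ∈ HolderBall (β i) B (t i) ∧
        (i + 1 < r → ∀ z ∈ cube (t i), γij z ∈ Set.Icc (0:ℝ) 1) ∧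
        ∀ x, g i x j = γij fun k => x (sel k)) ∧
    ∀ x, ∀ j : Fin (dd r), γ x = chainEval dd g r x j

/-- `β_i^* = β_i ∏_{k=i+1}^r min{β_k,1}` (0-indexed). -/
noncomputable def betaStar (r : ℕ) (β : ℕ → ℝ) (i : ℕ) : ℝ :=
  β i * ∏ k ∈ Finset.Ico (i+1) r, min (β k) 1

section Helpers

open scoped ENNReal
open Classical

variable {d : ℕ} (Q : ClsModel d)

lemma kernel_meas :
    Measurable (fun x => ENNReal.ofReal (Q.f x) • Measure.dirac (x, true)
      + ENNReal.ofReal (1 - Q.f x) • Measure.dirac (x, false)) := by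
  apply Measure.measurable_of_measurable_coe
  intro s hs
  simp only [Measure.coe_add, Pi.add_apply, Measure.smul_apply, smul_eq_mul]
  have h1 : Measurable fun x : Fin d → ℝ => (Measure.dirac (x, true)) s := by
    simp_rw [Measure.dirac_apply' _ hs]
    exact (measurable_const.indicator hs).comp (measurable_id.prodMk measurable_const)
  have h2 : Measurable fun x : Fin d → ℝ => (Measure.dirac (x, false)) s := by
    simp_rw [Measure.dirac_apply' _ hs]
    exact (measurable_const.indicator hs).comp (measurable_id.prodMk measurable_const)
  exact ((ENNReal.measurable_ofReal.comp Q.f_meas).mul h1).add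
    ((ENNReal.measurable_ofReal.comp (measurable_const.sub Q.f_meas)).mul h2)

lemma lintegral_joint (g : (Fin d → ℝ) × Bool → ℝ≥0∞) (hg : Measurable g) :
    ∫⁻ z, g z ∂Q.joint
      = ∫⁻ x, ENNReal.ofReal (Q.f x) * g (x, true)
          + ENNReal.ofReal (1 - Q.f x) * g (x, false) ∂Q.μ := by
  rw [ClsModel.joint, Measure.lintegral_bind (kernel_meas Q).aemeasurable hg.aemeasurable]
  congr 1
  ext x
  rw [lintegral_add_measure, lintegral_smul_measure, lintegral_smul_measure,
    lintegral_dirac' _ hg, lintegral_dirac' _ hg, smul_eq_mul, smul_eq_mul]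

instance joint_prob : IsProbabilityMeasure Q.joint := by
  constructor
  have := Q.prob
  rw [ClsModel.joint, Measure.bind_apply MeasurableSet.univ (kernel_meas Q).aemeasurable]
  have : ∀ x, (ENNReal.ofReal (Q.f x) • Measure.dirac (x, true)
      + ENNReal.ofReal (1 - Q.f x) • Measure.dirac (x, false)) Set.univ = 1 := by
    intro x
    simp only [Measure.coe_add, Pi.add_apply, Measure.smul_apply, smul_eq_mul,
      Measure.dirac_apply_of_mem (Set.mem_univ _), mul_one]
    rw [← ENNReal.ofReal_add (Q.f_nonneg x) (by linarith [Q.f_le_one x])]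
    norm_num
  simp_rw [this]
  exact lintegral_one.trans (by simp)

instance samples_prob (n : ℕ) : IsProbabilityMeasure (Q.samples n) := by
  rw [ClsModel.samples]
  infer_instance

lemma integral_joint (h : (Fin d → ℝ) × Bool → ℝ) (hm : Measurable h) (h0 : ∀ z, 0 ≤ h z) :
    ∫ z, h z ∂Q.joint
      = ∫ x, (Q.f x * h (x, true) + (1 - Q.f x) * h (x, false)) ∂Q.μ := by
  have hfx : ∀ x, 0 ≤ Q.f x := Q.f_nonneg
  have hfx1 : ∀ x, 0 ≤ 1 - Q.f x := fun x => by linarith [Q.f_le_one x]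
  have hm1 : Measurable fun x : Fin d → ℝ => h (x, true) :=
    hm.comp (measurable_id.prodMk measurable_const)
  have hm2 : Measurable fun x : Fin d → ℝ => h (x, false) :=
    hm.comp (measurable_id.prodMk measurable_const)
  rw [integral_eq_lintegral_of_nonneg_ae (Filter.Eventually.of_forall h0)
    hm.aestronglyMeasurable]
  rw [integral_eq_lintegral_of_nonneg_ae
    (Filter.Eventually.of_forall fun x =>
      add_nonneg (mul_nonneg (hfx x) (h0 _)) (mul_nonneg (hfx1 x) (h0 _)))
    ((Q.f_meas.mul hm1).add ((measurable_const.sub Q.f_meas).mul hm2)).aestronglyMeasurable]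
  rw [lintegral_joint Q (fun z => ENNReal.ofReal (h z)) (ENNReal.measurable_ofReal.comp hm)]
  congr 1
  apply lintegral_congr
  intro x
  rw [ENNReal.ofReal_add (mul_nonneg (hfx x) (h0 _)) (mul_nonneg (hfx1 x) (h0 _)),
    ENNReal.ofReal_mul (hfx x), ENNReal.ofReal_mul (hfx1 x)]

noncomputable def loss {d : ℕ} (G : Set (Fin d → ℝ)) (z : (Fin d → ℝ) × Bool) : ℝ :=
  if z.1 ∈ G ↔ z.2 = true then 0 else 1

lemma empRisk_eq {d n : ℕ} (ω : Fin n → (Fin d → ℝ) × Bool) (G : Set (Fin d → ℝ)) :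
    empRisk ω G = (n : ℝ)⁻¹ * ∑ i : Fin n, loss G (ω i) := rfl

lemma loss_nonneg {d : ℕ} (G : Set (Fin d → ℝ)) (z : (Fin d → ℝ) × Bool) : 0 ≤ loss G z := by
  unfold loss; split <;> norm_num

lemma loss_le_one {d : ℕ} (G : Set (Fin d → ℝ)) (z : (Fin d → ℝ) × Bool) : loss G z ≤ 1 := by
  unfold loss; split <;> norm_num

lemma loss_meas {d : ℕ} {G : Set (Fin d → ℝ)} (hG : MeasurableSet G) :
    Measurable (loss G) := by
  unfold loss
  apply Measurable.ite _ measurable_const measurable_const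
  have : {z : (Fin d → ℝ) × Bool | z.1 ∈ G ↔ z.2 = true}
      = (G ×ˢ ({true} : Set Bool)) ∪ (Gᶜ ×ˢ ({false} : Set Bool)) := by
    ext ⟨x, y⟩
    cases y <;> simp
  rw [this]
  exact (hG.prod (MeasurableSet.singleton _)).union (hG.compl.prod (MeasurableSet.singleton _))

lemma abs2f_le_one (x : Fin d → ℝ) : |2 * Q.f x - 1| ≤ 1 :=
  abs_le.2 ⟨by linarith [Q.f_nonneg x], by linarith [Q.f_le_one x]⟩

lemma dF_nonneg (G G' : Set (Fin d → ℝ)) : 0 ≤ Q.dF G G' :=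
  integral_nonneg fun x => abs_nonneg _

lemma dDel_nonneg (G G' : Set (Fin d → ℝ)) : 0 ≤ Q.dDel G G' := ENNReal.toReal_nonneg

lemma dDel_le_one (G G' : Set (Fin d → ℝ)) : Q.dDel G G' ≤ 1 := by
  haveI := Q.prob
  have := prob_le_one (μ := Q.μ) (s := symmDiff G G')
  simpa [ClsModel.dDel] using ENNReal.toReal_mono (by simp) this

lemma integrable_abs2f (s : Set (Fin d → ℝ)) :
    Integrable (fun x => |2 * Q.f x - 1|) (Q.μ.restrict s) := by
  haveI := Q.prob
  refine Integrable.mono' (integrable_const 1)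
    ((Q.f_meas.const_mul 2).sub measurable_const).abs.aestronglyMeasurable
    (Filter.Eventually.of_forall fun x => ?_)
  rw [Real.norm_eq_abs, abs_abs]
  exact abs2f_le_one Q x

lemma dF_le_dDel (G G' : Set (Fin d → ℝ)) : Q.dF G G' ≤ Q.dDel G G' := by
  haveI := Q.prob
  have h1 : Q.dF G G' ≤ ∫ _x in symmDiff G G', (1 : ℝ) ∂Q.μ := by
    refine integral_mono (integrable_abs2f Q _) (integrable_const 1) ?_
    intro x; exact abs2f_le_one Q x
  simpa [ClsModel.dDel, measureReal_def] using h1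

lemma dF_le_one (G G' : Set (Fin d → ℝ)) : Q.dF G G' ≤ 1 :=
  (dF_le_dDel Q G G').trans (dDel_le_one Q G G')

/-- the pointwise function whose integral is `dF G bayes`. -/
noncomputable def sfun {d : ℕ} (Q : ClsModel d) (G : Set (Fin d → ℝ)) : (Fin d → ℝ) → ℝ :=
  (symmDiff G Q.bayes).indicator fun x => |2 * Q.f x - 1|

lemma integral_sfun {G : Set (Fin d → ℝ)} (hG : MeasurableSet G)
    (hB : MeasurableSet Q.bayes) : ∫ x, sfun Q G x ∂Q.μ = Q.dF G Q.bayes := by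
  rw [sfun, integral_indicator (hG.symmDiff hB)]; rfl

lemma sfun_meas {G : Set (Fin d → ℝ)} (hG : MeasurableSet G)
    (hB : MeasurableSet Q.bayes) : Measurable (sfun Q G) :=
  ((Q.f_meas.const_mul 2).sub measurable_const).abs.indicator (hG.symmDiff hB)

lemma sfun_bound (G : Set (Fin d → ℝ)) (x : Fin d → ℝ) : |sfun Q G x| ≤ 1 := by
  rw [sfun, Set.indicator_apply]
  split
  · rw [abs_abs]; exact abs2f_le_one Q x
  · norm_num

lemma pointwise_exp_bound (G G₀ : Set (Fin d → ℝ)) {lam : ℝ} (h0 : 0 ≤ lam) (h1 : lam ≤ 1)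
    (x : Fin d → ℝ) :
    Q.f x * Real.exp (lam * (loss G₀ (x, true) - loss G (x, true)))
      + (1 - Q.f x) * Real.exp (lam * (loss G₀ (x, false) - loss G (x, false)))
    ≤ 1 + lam * (sfun Q G₀ x - sfun Q G x)
      + lam ^ 2 * (symmDiff G G₀).indicator (fun _ => (1 : ℝ)) x := by
  have hf0 := Q.f_nonneg x
  have hf1 := Q.f_le_one x
  have he1 : Real.exp lam ≤ 1 + lam + lam ^ 2 := by
    have := Real.exp_bound (x := lam) (by rw [abs_of_nonneg h0]; exact h1) (n := 2) (by norm_num)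
    rw [abs_of_nonneg h0] at this
    have h2 := abs_le.1 this
    simp [Finset.sum_range_succ] at h2
    nlinarith [h2.2, sq_nonneg lam]
  have he2 : Real.exp (-lam) ≤ 1 - lam + lam ^ 2 := by
    have := Real.exp_bound (x := -lam) (by rw [abs_neg, abs_of_nonneg h0]; exact h1)
      (n := 2) (by norm_num)
    rw [abs_neg, abs_of_nonneg h0] at this
    have h2 := abs_le.1 this
    simp [Finset.sum_range_succ] at h2
    nlinarith [h2.2, sq_nonneg lam]
  have hBiff : x ∈ Q.bayes ↔ (1/2 ≤ Q.f x) := Iff.rfl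
  by_cases hB' : (1/2 : ℝ) ≤ Q.f x
  all_goals by_cases hG : x ∈ G <;> by_cases hG0 : x ∈ G₀ <;>
    simp only [loss, sfun, Set.indicator_apply, Set.mem_symmDiff, hG, hG0, hBiff, hB',
      if_true, if_false, iff_true, iff_false, not_true, not_false_iff, true_and, false_and,
      and_true, and_false, not_not, true_or, or_true, false_or, or_false, ite_true, ite_false,
      ite_not, not_le] <;>
    norm_num
  all_goals
    first
      | nlinarith [abs_of_nonneg (show (0:ℝ) ≤ 2 * Q.f x - 1 by linarith), he1, he2]
      | nlinarith [abs_of_neg (show 2 * Q.f x - 1 < 0 by linarith), he1, he2]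
      | nlinarith [he1, he2]

lemma step_bound {G G₀ : Set (Fin d → ℝ)} (hG : MeasurableSet G) (hG₀ : MeasurableSet G₀)
    (hB : MeasurableSet Q.bayes) {lam : ℝ} (h0 : 0 ≤ lam) (h1 : lam ≤ 1) :
    ∫ z, Real.exp (lam * (loss G₀ z - loss G z)) ∂Q.joint
      ≤ Real.exp (lam * (Q.dF G₀ Q.bayes - Q.dF G Q.bayes) + lam ^ 2 * Q.dDel G G₀) := by
  haveI := Q.prob
  have hmV : Measurable fun z => Real.exp (lam * (loss G₀ z - loss G z)) :=
    (((loss_meas hG₀).sub (loss_meas hG)).const_mul lam).exp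
  rw [integral_joint Q _ hmV fun z => (Real.exp_pos _).le]
  have hsymm : MeasurableSet (symmDiff G G₀) := hG.symmDiff hG₀
  have hintL : Integrable (fun x =>
      Q.f x * Real.exp (lam * (loss G₀ (x, true) - loss G (x, true)))
        + (1 - Q.f x) * Real.exp (lam * (loss G₀ (x, false) - loss G (x, false)))) Q.μ := by
    refine Integrable.mono' (integrable_const (Real.exp 1 + Real.exp 1))
      ((Q.f_meas.mul (hmV.comp (measurable_id.prodMk measurable_const))).add
        ((measurable_const.sub Q.f_meas).mul
          (hmV.comp (measurable_id.prodMk measurable_const)))).aestronglyMeasurable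
      (Filter.Eventually.of_forall fun x => ?_)
    have hf0 := Q.f_nonneg x; have hf1 := Q.f_le_one x
    have key : ∀ z : (Fin d → ℝ) × Bool, Real.exp (lam * (loss G₀ z - loss G z)) ≤ Real.exp 1 := by
      intro z
      apply Real.exp_le_exp.2
      have := loss_nonneg G z; have := loss_le_one G z
      have := loss_nonneg G₀ z; have := loss_le_one G₀ z
      nlinarith
    have e1 := (Real.exp_pos (lam * (loss G₀ (x, true) - loss G (x, true)))).le
    have e2 := (Real.exp_pos (lam * (loss G₀ (x, false) - loss G (x, false)))).le
    rw [Real.norm_eq_abs, abs_of_nonneg (by nlinarith)]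
    have k1 := key (x, true); have k2 := key (x, false)
    nlinarith
  have hintS : ∀ G' : Set (Fin d → ℝ), MeasurableSet G' → Integrable (sfun Q G') Q.μ := by
    intro G' hG'
    refine Integrable.mono' (integrable_const 1) (sfun_meas Q hG' hB).aestronglyMeasurable
      (Filter.Eventually.of_forall fun x => ?_)
    rw [Real.norm_eq_abs]; exact sfun_bound Q G' x
  have hintI : Integrable ((symmDiff G G₀).indicator fun _ => (1:ℝ)) Q.μ :=
    (integrable_const 1).indicator hsymm
  have hintR : Integrable (fun x => 1 + lam * (sfun Q G₀ x - sfun Q G x)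
      + lam ^ 2 * (symmDiff G G₀).indicator (fun _ => (1:ℝ)) x) Q.μ := by
    exact ((integrable_const 1).add
      ((((hintS G₀ hG₀).sub (hintS G hG)).const_mul lam))).add (hintI.const_mul _)
  calc ∫ x, (Q.f x * Real.exp (lam * (loss G₀ (x, true) - loss G (x, true)))
        + (1 - Q.f x) * Real.exp (lam * (loss G₀ (x, false) - loss G (x, false)))) ∂Q.μ
      ≤ ∫ x, (1 + lam * (sfun Q G₀ x - sfun Q G x)
          + lam ^ 2 * (symmDiff G G₀).indicator (fun _ => (1:ℝ)) x) ∂Q.μ :=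
        integral_mono hintL hintR (pointwise_exp_bound Q G G₀ h0 h1)
    _ = 1 + (lam * (Q.dF G₀ Q.bayes - Q.dF G Q.bayes) + lam ^ 2 * Q.dDel G G₀) := by
        have i1 : Integrable (fun _x : Fin d → ℝ => (1:ℝ)) Q.μ := integrable_const 1
        have i2 : Integrable (fun x => lam * (sfun Q G₀ x - sfun Q G x)) Q.μ :=
          ((hintS G₀ hG₀).sub (hintS G hG)).const_mul lam
        have i3 : Integrable
            (fun x => lam ^ 2 * (symmDiff G G₀).indicator (fun _ => (1:ℝ)) x) Q.μ :=
          hintI.const_mul _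
        have i4 : Integrable (fun x => sfun Q G₀ x - sfun Q G x) Q.μ :=
          (hintS G₀ hG₀).sub (hintS G hG)
        have i12 : Integrable (fun x => 1 + lam * (sfun Q G₀ x - sfun Q G x)) Q.μ := i1.add i2
        rw [integral_add i12 i3, integral_add i1 i2,
          integral_const, integral_const_mul, integral_const_mul,
          integral_sub (hintS G₀ hG₀) (hintS G hG),
          integral_sfun Q hG₀ hB, integral_sfun Q hG hB]
        have : ∫ x, (symmDiff G G₀).indicator (fun _ => (1:ℝ)) x ∂Q.μ = Q.dDel G G₀ := by
          rw [integral_indicator hsymm, setIntegral_const, smul_eq_mul, mul_one]; rfl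
        rw [this]
        simp [measure_univ]
        ring
    _ ≤ Real.exp (lam * (Q.dF G₀ Q.bayes - Q.dF G Q.bayes) + lam ^ 2 * Q.dDel G G₀) := by
        rw [add_comm]
        exact Real.add_one_le_exp _

set_option synthInstance.maxHeartbeats 1000000 in
lemma tail_bound (n : ℕ) {G G₀ : Set (Fin d → ℝ)} (hG : MeasurableSet G)
    (hG₀ : MeasurableSet G₀) (hB : MeasurableSet Q.bayes) {lam : ℝ}
    (h0 : 0 ≤ lam) (h1 : lam ≤ 1) :
    ((Q.samples n) {ω | 0 ≤ ∑ i, (loss G₀ (ω i) - loss G (ω i))}).toReal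
      ≤ Real.exp (lam * (Q.dF G₀ Q.bayes - Q.dF G Q.bayes) + lam ^ 2 * Q.dDel G G₀) ^ n := by
  letI : MeasureSpace ((Fin d → ℝ) × Bool) := ⟨Q.joint⟩
  haveI : IsProbabilityMeasure (volume : Measure ((Fin d → ℝ) × Bool)) := joint_prob Q
  haveI : SigmaFinite (volume : Measure ((Fin d → ℝ) × Bool)) := inferInstance
  haveI : IsProbabilityMeasure (Q.samples n) := samples_prob Q n
  have hvol : (volume : Measure (Fin n → (Fin d → ℝ) × Bool)) = Q.samples n := rfl
  have hmV : Measurable fun z => Real.exp (lam * (loss G₀ z - loss G z)) :=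
    (((loss_meas hG₀).sub (loss_meas hG)).const_mul lam).exp
  have key : ∀ z : (Fin d → ℝ) × Bool,
      Real.exp (lam * (loss G₀ z - loss G z)) ≤ Real.exp 1 := by
    intro z
    apply Real.exp_le_exp.2
    have := loss_nonneg G z; have := loss_le_one G z
    have := loss_nonneg G₀ z; have := loss_le_one G₀ z
    nlinarith
  have hint1 : Integrable (fun z => Real.exp (lam * (loss G₀ z - loss G z)))
      (volume : Measure ((Fin d → ℝ) × Bool)) := by
    refine Integrable.mono' (integrable_const (Real.exp 1)) hmV.aestronglyMeasurable
      (Filter.Eventually.of_forall fun z => ?_)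
    rw [Real.norm_eq_abs, abs_of_nonneg (Real.exp_pos _).le]
    exact key z
  have hintP : Integrable (fun ω : Fin n → (Fin d → ℝ) × Bool =>
      ∏ i, Real.exp (lam * (loss G₀ (ω i) - loss G (ω i)))) (Q.samples n) := by
    rw [← hvol]
    exact Integrable.fintype_prod (f := fun _ z => Real.exp (lam * (loss G₀ z - loss G z)))
      fun i => hint1
  have hT : MeasurableSet {ω : Fin n → (Fin d → ℝ) × Bool |
      0 ≤ ∑ i, (loss G₀ (ω i) - loss G (ω i))} := by
    apply measurableSet_le measurable_const
    exact Finset.measurable_sum _ fun i _ =>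
      ((loss_meas hG₀).comp (measurable_pi_apply i)).sub
        ((loss_meas hG).comp (measurable_pi_apply i))
  have hprod : (∫ ω, ∏ i, Real.exp (lam * (loss G₀ (ω i) - loss G (ω i))) ∂Q.samples n)
      = (∫ z, Real.exp (lam * (loss G₀ z - loss G z)) ∂Q.joint) ^ n := by
    rw [← hvol]
    have := MeasureTheory.integral_fintype_prod_eq_pow (𝕜 := ℝ) (ι := Fin n) (μ := (volume : Measure ((Fin d → ℝ) × Bool)))
      (fun z : (Fin d → ℝ) × Bool => Real.exp (lam * (loss G₀ z - loss G z)))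
    rw [Fintype.card_fin] at this
    exact this
  have hmark : ((Q.samples n) {ω | 0 ≤ ∑ i, (loss G₀ (ω i) - loss G (ω i))}).toReal
      ≤ ∫ ω, ∏ i, Real.exp (lam * (loss G₀ (ω i) - loss G (ω i))) ∂Q.samples n := by
    have hind := integral_indicator_const (1 : ℝ) hT (μ := Q.samples n)
    rw [smul_eq_mul, mul_one, measureReal_def] at hind
    rw [← hind]
    refine integral_mono ((integrable_const 1).indicator hT) hintP fun ω => ?_
    by_cases hω : ω ∈ {ω : Fin n → (Fin d → ℝ) × Bool | 0 ≤ ∑ i, (loss G₀ (ω i) - loss G (ω i))}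
    · rw [Set.indicator_of_mem hω, ← Real.exp_sum]
      apply Real.one_le_exp
      rw [← Finset.mul_sum]
      exact mul_nonneg h0 hω
    · rw [Set.indicator_of_notMem hω]
      exact Finset.prod_nonneg fun i _ => (Real.exp_pos _).le
  refine hmark.trans (hprod ▸ ?_)
  apply pow_le_pow_left₀ (integral_nonneg fun z => (Real.exp_pos _).le)
  exact step_bound Q hG hG₀ hB h0 h1

lemma exponent_opt {c₁ κ u a w ε : ℝ} (hc₁ : 0 < c₁) (hκ : 1 ≤ κ) (hε : 0 < ε)
    (hu : ε ≤ u) (hu1 : u ≤ 1) (ha : a ≤ u / 2) (hw0 : 0 ≤ w)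
    (hw : w ≤ 2 * (u / c₁) ^ (1 / κ)) :
    ∃ lam : ℝ, 0 ≤ lam ∧ lam ≤ 1 ∧
      lam * (a - u) + lam ^ 2 * w
        ≤ -(min (c₁ ^ (1 / κ) / 32) (1 / 4) * ε ^ (2 - 1 / κ)) := by
  have hu0 : (0:ℝ) < u := lt_of_lt_of_le hε hu
  have hκ0 : (0:ℝ) < κ := lt_of_lt_of_le one_pos hκ
  have hexp1 : (1:ℝ) ≤ 2 - 1 / κ := by
    have : 1 / κ ≤ 1 := by
      rw [div_le_one hκ0]; exact hκ
    linarith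
  have hexp0 : (0:ℝ) ≤ 2 - 1 / κ := by linarith
  set M : ℝ := 2 * (u / c₁) ^ (1 / κ) with hM_def
  have hM : 0 < M := by
    have : (0:ℝ) < (u / c₁) ^ (1 / κ) := Real.rpow_pos_of_pos (div_pos hu0 hc₁) _
    positivity
  set c₄ : ℝ := min (c₁ ^ (1 / κ) / 32) (1 / 4) with hc₄_def
  have hmono : ε ^ (2 - 1 / κ) ≤ u ^ (2 - 1 / κ) := Real.rpow_le_rpow hε.le hu hexp0
  have key1 : u ^ 2 / (16 * M) = c₁ ^ (1 / κ) / 32 * u ^ (2 - 1 / κ) := by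
    rw [hM_def, Real.div_rpow hu0.le hc₁.le, Real.rpow_sub hu0]
    rw [show u ^ ((2:ℝ)) = u ^ (2:ℕ) from Real.rpow_natCast u 2]
    have h1 : (u / c₁) ^ (1 / κ) ≠ 0 := ne_of_gt (Real.rpow_pos_of_pos (div_pos hu0 hc₁) _)
    have h2 : u ^ ((1:ℝ) / κ) ≠ 0 := ne_of_gt (Real.rpow_pos_of_pos hu0 _)
    have h3 : c₁ ^ ((1:ℝ) / κ) ≠ 0 := ne_of_gt (Real.rpow_pos_of_pos hc₁ _)
    field_simp
    ring
  have keyu : u ^ (2 - 1 / κ) ≤ u := by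
    have := Real.rpow_le_rpow_of_exponent_ge hu0 hu1 hexp1
    rwa [Real.rpow_one] at this
  by_cases hcase : u / (4 * M) ≤ 1
  · refine ⟨u / (4 * M), by positivity, hcase, ?_⟩
    have hlam0 : 0 ≤ u / (4 * M) := by positivity
    have step1 : u / (4 * M) * (a - u) + (u / (4 * M)) ^ 2 * w
        ≤ u / (4 * M) * (-(u/2)) + (u / (4 * M)) ^ 2 * M := by
      have h1 : u / (4 * M) * (a - u) ≤ u / (4 * M) * (-(u/2)) :=
        mul_le_mul_of_nonneg_left (by linarith) hlam0
      have h2 : (u / (4 * M)) ^ 2 * w ≤ (u / (4 * M)) ^ 2 * M :=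
        mul_le_mul_of_nonneg_left hw (by positivity)
      linarith
    have step2 : u / (4 * M) * (-(u/2)) + (u / (4 * M)) ^ 2 * M = -(u ^ 2 / (16 * M)) := by
      field_simp
      ring
    have step3 : c₄ * ε ^ (2 - 1 / κ) ≤ u ^ 2 / (16 * M) := by
      rw [key1]
      have hcc : c₄ ≤ c₁ ^ (1 / κ) / 32 := min_le_left _ _
      have h4 : (0:ℝ) ≤ ε ^ (2 - 1/κ) := Real.rpow_nonneg hε.le _
      have h5 : (0:ℝ) ≤ c₁ ^ (1/κ) / 32 := by positivity
      nlinarith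
    linarith
  · push_neg at hcase
    refine ⟨1, zero_le_one, le_refl 1, ?_⟩
    have hMu : M < u / 4 := by
      rw [lt_div_iff₀ (by positivity : (0:ℝ) < 4 * M)] at hcase
      linarith
    have step3 : c₄ * ε ^ (2 - 1 / κ) ≤ u / 4 := by
      have hcc : c₄ ≤ 1/4 := min_le_right _ _
      have h4 : (0:ℝ) ≤ ε ^ (2 - 1/κ) := Real.rpow_nonneg hε.le _
      have h6 : ε ^ (2 - 1/κ) ≤ u := le_trans hmono keyu
      nlinarith
    nlinarith

lemma noise_inv {c₁ κ x y : ℝ} (hc₁ : 0 < c₁) (hκ0 : 0 < κ) (hx : 0 ≤ x)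
    (h : c₁ * x ^ κ ≤ y) : x ≤ (y / c₁) ^ (1 / κ) := by
  have h1 : x ^ κ ≤ y / c₁ := (le_div_iff₀' hc₁).2 h
  have h2 : (x ^ κ) ^ (1 / κ) ≤ (y / c₁) ^ (1 / κ) :=
    Real.rpow_le_rpow (Real.rpow_nonneg hx _) h1 (by positivity)
  calc x = (x ^ κ) ^ (1 / κ) := by
        rw [← Real.rpow_mul hx, mul_one_div, div_self (ne_of_gt hκ0), Real.rpow_one]
    _ ≤ (y / c₁) ^ (1 / κ) := h2

lemma dDel_triangle (G G' : Set (Fin d → ℝ)) :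
    Q.dDel G G' ≤ Q.dDel G Q.bayes + Q.dDel G' Q.bayes := by
  haveI := Q.prob
  have hsub : symmDiff G G' ⊆ symmDiff G Q.bayes ∪ symmDiff G' Q.bayes := by
    have := symmDiff_triangle G Q.bayes G'
    intro x hx
    rcases this hx with h | h
    · exact Or.inl h
    · exact Or.inr (symmDiff_comm Q.bayes G' ▸ h)
  have h1 : Q.μ (symmDiff G G') ≤ Q.μ (symmDiff G Q.bayes) + Q.μ (symmDiff G' Q.bayes) :=
    le_trans (measure_mono hsub) (measure_union_le _ _)
  rw [ClsModel.dDel, ClsModel.dDel, ClsModel.dDel]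
  have hfin1 : Q.μ (symmDiff G Q.bayes) ≠ ⊤ := measure_ne_top _ _
  have hfin2 : Q.μ (symmDiff G' Q.bayes) ≠ ⊤ := measure_ne_top _ _
  rw [← ENNReal.toReal_add hfin1 hfin2]
  exact ENNReal.toReal_mono (by simp [hfin1, hfin2]) h1

lemma per_G_bound (n : ℕ) {G G₀ : Set (Fin d → ℝ)} (hG : MeasurableSet G)
    (hG₀ : MeasurableSet G₀) (hB : MeasurableSet Q.bayes)
    {c₁ κ ε : ℝ} (hc₁ : 0 < c₁) (hκ : 1 ≤ κ) (hε : 0 < ε)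
    (hnG : c₁ * Q.dDel G Q.bayes ^ κ ≤ Q.dF G Q.bayes)
    (hnG₀ : c₁ * Q.dDel G₀ Q.bayes ^ κ ≤ Q.dF G₀ Q.bayes)
    (hu : ε ≤ Q.dF G Q.bayes) (ha : Q.dF G₀ Q.bayes ≤ ε / 2) :
    ((Q.samples n) {ω | 0 ≤ ∑ i, (loss G₀ (ω i) - loss G (ω i))}).toReal
      ≤ Real.exp (-((n : ℝ) * (min (c₁ ^ (1 / κ) / 32) (1 / 4) * ε ^ (2 - 1 / κ)))) := by
  have hκ0 : (0:ℝ) < κ := lt_of_lt_of_le one_pos hκ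
  set u := Q.dF G Q.bayes with hu_def
  set a := Q.dF G₀ Q.bayes with ha_def
  set w := Q.dDel G G₀ with hw_def
  have hu0 : 0 < u := lt_of_lt_of_le hε hu
  have hu1 : u ≤ 1 := dF_le_one Q G Q.bayes
  have ha2 : a ≤ u / 2 := le_trans ha (by linarith)
  have hw0 : 0 ≤ w := dDel_nonneg Q G G₀
  have hwle : w ≤ 2 * (u / c₁) ^ (1 / κ) := by
    have h1 : Q.dDel G Q.bayes ≤ (u / c₁) ^ (1 / κ) :=
      noise_inv hc₁ hκ0 (dDel_nonneg Q G Q.bayes) hnG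
    have h2 : Q.dDel G₀ Q.bayes ≤ (a / c₁) ^ (1 / κ) :=
      noise_inv hc₁ hκ0 (dDel_nonneg Q G₀ Q.bayes) hnG₀
    have ha0 : 0 ≤ a := dF_nonneg Q G₀ Q.bayes
    have h3 : (a / c₁) ^ (1 / κ) ≤ (u / c₁) ^ (1 / κ) :=
      Real.rpow_le_rpow (div_nonneg ha0 hc₁.le)
        ((div_le_div_iff_of_pos_right hc₁).2 (by linarith)) (by positivity)
    calc w ≤ Q.dDel G Q.bayes + Q.dDel G₀ Q.bayes := dDel_triangle Q G G₀
      _ ≤ (u / c₁) ^ (1 / κ) + (a / c₁) ^ (1 / κ) := add_le_add h1 h2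
      _ ≤ 2 * (u / c₁) ^ (1 / κ) := by linarith
  obtain ⟨lam, hlam0, hlam1, hopt⟩ :=
    exponent_opt hc₁ hκ hε hu hu1 ha2 hw0 hwle
  calc ((Q.samples n) {ω | 0 ≤ ∑ i, (loss G₀ (ω i) - loss G (ω i))}).toReal
      ≤ Real.exp (lam * (a - u) + lam ^ 2 * w) ^ n :=
        tail_bound Q n hG hG₀ hB hlam0 hlam1
    _ ≤ Real.exp (-(min (c₁ ^ (1 / κ) / 32) (1 / 4) * ε ^ (2 - 1 / κ))) ^ n := by
        exact pow_le_pow_left₀ (Real.exp_pos _).le (Real.exp_le_exp.2 hopt) n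
    _ = Real.exp (-((n : ℝ) * (min (c₁ ^ (1 / κ) / 32) (1 / 4) * ε ^ (2 - 1 / κ)))) := by
        rw [← Real.exp_nat_mul]
        ring_nf

lemma main_bound {n : ℕ} (N' : Finset (Set (Fin d → ℝ))) (hmeas : ∀ G ∈ N', MeasurableSet G)
    (hB : MeasurableSet Q.bayes) {c₁ κ ε : ℝ} (hc₁ : 0 < c₁) (hκ : 1 ≤ κ) (hε : 0 < ε)
    (hnoise : ∀ G ∈ N', c₁ * Q.dDel G Q.bayes ^ κ ≤ Q.dF G Q.bayes)
    {G₀ : Set (Fin d → ℝ)} (hG₀ : G₀ ∈ N') (ha : Q.dF G₀ Q.bayes ≤ ε / 2)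
    (Ghat : (Fin n → (Fin d → ℝ) × Bool) → Set (Fin d → ℝ))
    (hERM : isERM (↑N' : Set (Set (Fin d → ℝ))) Ghat) :
    ∃ B : Set (Fin n → (Fin d → ℝ) × Bool), MeasurableSet B ∧
      ((Q.samples n) B).toReal
        ≤ (N'.card : ℝ) *
            Real.exp (-((n : ℝ) * (min (c₁ ^ (1 / κ) / 32) (1 / 4) * ε ^ (2 - 1 / κ)))) ∧
      ∀ ω, ω ∉ B → Q.dF (Ghat ω) Q.bayes ≤ ε := by
  haveI := samples_prob Q n
  classical
  set S : Finset (Set (Fin d → ℝ)) := N'.filter (fun G => ε < Q.dF G Q.bayes) with hS_def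
  have hTmeas : ∀ G ∈ S, MeasurableSet
      {ω : Fin n → (Fin d → ℝ) × Bool | 0 ≤ ∑ i, (loss G₀ (ω i) - loss G (ω i))} := by
    intro G hGS
    apply measurableSet_le measurable_const
    exact Finset.measurable_sum _ fun i _ =>
      ((loss_meas (hmeas G₀ hG₀)).comp (measurable_pi_apply i)).sub
        ((loss_meas (hmeas G (Finset.mem_of_mem_filter G hGS))).comp (measurable_pi_apply i))
  refine ⟨⋃ G ∈ S, {ω | 0 ≤ ∑ i, (loss G₀ (ω i) - loss G (ω i))}, ?_, ?_, ?_⟩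
  · exact S.measurableSet_biUnion hTmeas
  · have hstep : ∀ G ∈ S, (Q.samples n) {ω | 0 ≤ ∑ i, (loss G₀ (ω i) - loss G (ω i))}
        ≤ ENNReal.ofReal
            (Real.exp (-((n : ℝ) * (min (c₁ ^ (1 / κ) / 32) (1 / 4) * ε ^ (2 - 1 / κ))))) := by
      intro G hGS
      rw [ENNReal.le_ofReal_iff_toReal_le (measure_ne_top _ _) (Real.exp_pos _).le]
      have hGN : G ∈ N' := Finset.mem_of_mem_filter G hGS
      have hGε : ε < Q.dF G Q.bayes := by
        have := Finset.mem_filter.1 hGS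
        exact this.2
      exact per_G_bound Q n (hmeas G hGN) (hmeas G₀ hG₀) hB hc₁ hκ hε
        (hnoise G hGN) (hnoise G₀ hG₀) hGε.le ha
    have h1 : (Q.samples n) (⋃ G ∈ S, {ω | 0 ≤ ∑ i, (loss G₀ (ω i) - loss G (ω i))})
        ≤ ∑ G ∈ S, (Q.samples n) {ω | 0 ≤ ∑ i, (loss G₀ (ω i) - loss G (ω i))} :=
      measure_biUnion_finset_le _ _
    have h2 : (∑ G ∈ S, (Q.samples n) {ω | 0 ≤ ∑ i, (loss G₀ (ω i) - loss G (ω i))})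
        ≤ S.card • ENNReal.ofReal
            (Real.exp (-((n : ℝ) * (min (c₁ ^ (1 / κ) / 32) (1 / 4) * ε ^ (2 - 1 / κ))))) :=
      Finset.sum_le_card_nsmul _ _ _ hstep
    have h3 := le_trans h1 h2
    have h4 : (S.card • ENNReal.ofReal
        (Real.exp (-((n : ℝ) * (min (c₁ ^ (1 / κ) / 32) (1 / 4) * ε ^ (2 - 1 / κ))))))
        = ENNReal.ofReal ((S.card : ℝ) *
            Real.exp (-((n : ℝ) * (min (c₁ ^ (1 / κ) / 32) (1 / 4) * ε ^ (2 - 1 / κ))))) := by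
      rw [nsmul_eq_mul, ENNReal.ofReal_mul (by positivity), ENNReal.ofReal_natCast]
    rw [h4] at h3
    calc ((Q.samples n) (⋃ G ∈ S, {ω | 0 ≤ ∑ i, (loss G₀ (ω i) - loss G (ω i))})).toReal
        ≤ (ENNReal.ofReal ((S.card : ℝ) *
            Real.exp (-((n : ℝ) * (min (c₁ ^ (1 / κ) / 32) (1 / 4) * ε ^ (2 - 1 / κ)))))).toReal :=
          ENNReal.toReal_mono ENNReal.ofReal_ne_top h3
      _ = (S.card : ℝ) *
            Real.exp (-((n : ℝ) * (min (c₁ ^ (1 / κ) / 32) (1 / 4) * ε ^ (2 - 1 / κ)))) := by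
          rw [ENNReal.toReal_ofReal (by positivity)]
      _ ≤ (N'.card : ℝ) *
            Real.exp (-((n : ℝ) * (min (c₁ ^ (1 / κ) / 32) (1 / 4) * ε ^ (2 - 1 / κ)))) := by
          apply mul_le_mul_of_nonneg_right _ (Real.exp_pos _).le
          exact_mod_cast Nat.cast_le.2 (Finset.card_filter_le _ _)
  · intro ω hω
    by_contra hcon
    push_neg at hcon
    apply hω
    have hGhat : Ghat ω ∈ N' := by
      have := (hERM ω).1
      exact_mod_cast this
    have hGS : Ghat ω ∈ S := Finset.mem_filter.2 ⟨hGhat, hcon⟩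
    refine Set.mem_biUnion hGS ?_
    have hle := (hERM ω).2 G₀ (by exact_mod_cast hG₀)
    rw [empRisk_eq, empRisk_eq] at hle
    simp only [Set.mem_setOf_eq]
    rw [Finset.sum_sub_distrib]
    rcases Nat.eq_zero_or_pos n with hn | hn
    · subst hn
      simp
    · have hinv : (0:ℝ) < (n : ℝ)⁻¹ := by positivity
      have := (mul_le_mul_iff_right₀ hinv).1 hle
      linarith

lemma integral_rpow_le {α : Type*} [MeasurableSpace α] (μ : Measure α)
    [IsProbabilityMeasure μ] (g : α → ℝ) {B : Set α} (hB : MeasurableSet B)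
    {c p : ℝ} (hc : 0 ≤ c) (hp : 1 ≤ p) (hg0 : ∀ ω, 0 ≤ g ω) (hg1 : ∀ ω, g ω ≤ 1)
    (hgB : ∀ ω, ω ∉ B → g ω ≤ c) :
    ∫ ω, g ω ^ p ∂μ ≤ c ^ p + (μ B).toReal := by
  have hp0 : (0:ℝ) ≤ p := le_trans zero_le_one hp
  have hcp : (0:ℝ) ≤ c ^ p := Real.rpow_nonneg hc _
  by_cases hint : Integrable (fun ω => g ω ^ p) μ
  · have hptwise : ∀ ω, g ω ^ p ≤ c ^ p + B.indicator (fun _ => (1:ℝ)) ω := by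
      intro ω
      by_cases hω : ω ∈ B
      · rw [Set.indicator_of_mem hω]
        have : g ω ^ p ≤ 1 := Real.rpow_le_one (hg0 ω) (hg1 ω) hp0
        linarith
      · rw [Set.indicator_of_notMem hω]
        have : g ω ^ p ≤ c ^ p := Real.rpow_le_rpow (hg0 ω) (hgB ω hω) hp0
        linarith
    have hint2 : Integrable (fun ω => c ^ p + B.indicator (fun _ => (1:ℝ)) ω) μ :=
      (integrable_const _).add ((integrable_const 1).indicator hB)
    calc ∫ ω, g ω ^ p ∂μ ≤ ∫ ω, (c ^ p + B.indicator (fun _ => (1:ℝ)) ω) ∂μ :=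
          integral_mono hint hint2 hptwise
      _ = c ^ p + (μ B).toReal := by
          rw [integral_add (integrable_const _) ((integrable_const 1).indicator hB),
            integral_const, integral_indicator_const _ hB]
          simp [measure_univ, measureReal_def]
  · rw [integral_undef hint]
    positivity

lemma rpow_neg_le_rpow_neg {x y κ : ℝ} (hx : 0 < x) (hxy : x ≤ y) (hκ : 0 ≤ κ) :
    y ^ (-κ) ≤ x ^ (-κ) := by
  rw [Real.rpow_neg hx.le, Real.rpow_neg (hx.trans_le hxy).le]
  exact inv_anti₀ (Real.rpow_pos_of_pos hx κ) (Real.rpow_le_rpow hx.le hxy hκ)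

lemma eventually_rpow_exp (s D : ℝ) (hD : 0 < D) :
    ∃ N₂ : ℕ, ∀ n : ℕ, n ≥ N₂ → (n : ℝ) ^ s * Real.exp (-(n : ℝ) ^ D) ≤ 1 := by
  have hev : ∀ᶠ x : ℝ in Filter.atTop, s * Real.log x ≤ x ^ D := by
    rcases le_or_gt s 0 with hs | hs
    · filter_upwards [Filter.eventually_ge_atTop 1] with x hx
      have h1 : 0 ≤ Real.log x := Real.log_nonneg hx
      have h2 : 0 < x ^ D := Real.rpow_pos_of_pos (by linarith) D
      nlinarith
    · have h := (isLittleO_log_rpow_atTop hD).def (c := 1 / (s + 1)) (by positivity)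
      filter_upwards [h, Filter.eventually_ge_atTop 1] with x h1 hx
      rw [Real.norm_eq_abs, Real.norm_eq_abs, abs_of_nonneg (Real.log_nonneg hx),
        abs_of_nonneg (Real.rpow_nonneg (by linarith) D)] at h1
      have hxD : 0 ≤ x ^ D := Real.rpow_nonneg (by linarith) D
      have h3 : s * Real.log x ≤ s * ((1 / (s + 1)) * x ^ D) :=
        mul_le_mul_of_nonneg_left h1 hs.le
      have h4 : s * ((1 / (s + 1)) * x ^ D) ≤ x ^ D := by
        rw [← mul_assoc]
        have : s * (1 / (s + 1)) ≤ 1 := by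
          rw [mul_one_div, div_le_one (by linarith)]; linarith
        nlinarith
      linarith
  obtain ⟨x₀, hx₀⟩ := Filter.eventually_atTop.1 (hev.and (Filter.eventually_ge_atTop 1))
  refine ⟨⌈x₀⌉₊, fun n hn => ?_⟩
  have hx : x₀ ≤ (n : ℝ) := le_trans (Nat.le_ceil x₀) (by exact_mod_cast hn)
  obtain ⟨h1, h2⟩ := hx₀ (n : ℝ) hx
  have hn0 : (0:ℝ) < n := by linarith
  rw [Real.rpow_def_of_pos hn0, ← Real.exp_add]
  calc Real.exp (Real.log n * s + -(n:ℝ) ^ D) ≤ Real.exp 0 := by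
        apply Real.exp_le_exp.2
        have hcm : Real.log n * s = s * Real.log n := mul_comm _ _
        rw [hcm]
        linarith
    _ = 1 := Real.exp_zero

end Helpers

/-- **Proposition 2.1** (general convergence rates for empirical risk minimizers under the
Tsybakov noise condition). -/
theorem general_convergence_rates
    (d : ℕ) (τ : ℕ → ℝ) (hτpos : ∀ n, 0 < τ n) (hτmono : Monotone τ)
    (𝔔 : Set (ClsModel d)) (N : ℕ → Finset (Set (Fin d → ℝ)))
    -- (i) measurability
    (hmeas : ∀ _Q ∈ 𝔔, ∀ n, ∀ G ∈ N n, MeasurableSet G)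
    (hmeasB : ∀ Q ∈ 𝔔, MeasurableSet Q.bayes)
    -- (ii) the Tsybakov noise condition
    (κ : ℝ) (hκ : 1 ≤ κ) (c₁ : ℝ) (hc₁ : 0 < c₁)
    (hnoise : ∀ Q ∈ 𝔔, ∀ n, ∀ G ∈ N n,
      c₁ * Q.dDel G Q.bayes ^ κ ≤ Q.dF G Q.bayes)
    (N₀ : ℕ)
    -- (iii) approximation
    (c₂ : ℝ) (hc₂ : 0 < c₂)
    (happrox : ∀ n ≥ N₀, ∀ Q ∈ 𝔔, ∃ G ∈ N n, Q.dF G Q.bayes ≤ c₂ * τ n ^ (-κ))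
    -- (iv) entropy bound
    (c₃ ρ : ℝ) (hc₃ : 0 < c₃) (hρ : 0 < ρ)
    (hent : ∀ n ≥ N₀, Real.log ((N n).card) ≤ c₃ * (n : ℝ) ^ (ρ / (ρ + 2 * κ - 1))) :
    ∀ p : ℝ, 1 ≤ p →
      -- limsup_n sup_Q τ̃_n^{κp} E[d_{f_Q}^p(Ĝ_n, G*_Q)] < ∞
      ((∃ C : ℝ, ∃ N₁ : ℕ, ∀ n ≥ N₁, ∀ Q ∈ 𝔔,
        ∀ Ghat : (Fin n → (Fin d → ℝ) × Bool) → Set (Fin d → ℝ),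
          isERM (↑(N n) : Set (Set (Fin d → ℝ))) Ghat →
            min (τ n) ((n : ℝ) ^ (1 / (ρ + 2 * κ - 1))) ^ (κ * p) *
              clsRisk Q n Ghat ClsModel.dF p ≤ C) ∧
      -- limsup_n sup_Q τ̃_n^{p} E[d_Δ^p(Ĝ_n, G*_Q)] < ∞
      (∃ C : ℝ, ∃ N₁ : ℕ, ∀ n ≥ N₁, ∀ Q ∈ 𝔔,
        ∀ Ghat : (Fin n → (Fin d → ℝ) × Bool) → Set (Fin d → ℝ),
          isERM (↑(N n) : Set (Set (Fin d → ℝ))) Ghat →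
            min (τ n) ((n : ℝ) ^ (1 / (ρ + 2 * κ - 1))) ^ p *
              clsRisk Q n Ghat ClsModel.dDel p ≤ C)) := by
  intro p hp
  have hκ0 : (0:ℝ) < κ := lt_of_lt_of_le one_pos hκ
  have hp0 : (0:ℝ) < p := lt_of_lt_of_le one_pos hp
  have hden : (0:ℝ) < ρ + 2 * κ - 1 := by linarith
  set al : ℝ := 1 / (ρ + 2 * κ - 1) with hal_def
  have hal : 0 < al := by positivity
  set D : ℝ := ρ / (ρ + 2 * κ - 1) with hD_def
  have hD : 0 < D := by positivity
  set c₄ : ℝ := min (c₁ ^ (1 / κ) / 32) (1 / 4) with hc₄_def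
  have hc₄ : 0 < c₄ := lt_min (by positivity) (by norm_num)
  set q : ℝ := 2 - 1 / κ with hq_def
  have hq : 0 < q := by
    have : 1 / κ ≤ 1 := by rw [div_le_one hκ0]; exact hκ
    simp only [hq_def]; linarith
  set K : ℝ := max (2 * c₂) (((c₃ + 1) / c₄) ^ (1 / q)) with hK_def
  have hK0 : 0 < K := lt_of_lt_of_le (by positivity) (le_max_left _ _)
  have hKq : (c₃ + 1) / c₄ ≤ K ^ q := by
    have h1 : ((c₃ + 1) / c₄) ^ (1 / q) ≤ K := le_max_right _ _
    have h2 : (((c₃ + 1) / c₄) ^ (1 / q)) ^ q ≤ K ^ q :=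
      Real.rpow_le_rpow (Real.rpow_nonneg (by positivity) _) h1 hq.le
    rwa [← Real.rpow_mul (by positivity), one_div_mul_cancel hq.ne', Real.rpow_one] at h2
  obtain ⟨N₂, hN₂⟩ := eventually_rpow_exp (al * (κ * p)) D hD
  set N₁ : ℕ := max (max N₀ 1) N₂ with hN₁_def
  -- the shared key fact
  have key : ∀ n, N₁ ≤ n → ∀ Q ∈ 𝔔,
      ∀ Ghat : (Fin n → (Fin d → ℝ) × Bool) → Set (Fin d → ℝ),
        isERM (↑(N n) : Set (Set (Fin d → ℝ))) Ghat →
        ∃ B : Set (Fin n → (Fin d → ℝ) × Bool), MeasurableSet B ∧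
          ((Q.samples n) B).toReal ≤ Real.exp (-(n : ℝ) ^ D) ∧
          ∀ ω, ω ∉ B →
            Q.dF (Ghat ω) Q.bayes ≤ K * (min (τ n) ((n : ℝ) ^ al)) ^ (-κ) := by
    intro n hn Q hQ Ghat hERM
    have hnN₀ : N₀ ≤ n := le_trans (le_trans (le_max_left _ _) (le_max_left _ _)) hn
    have hn1 : 1 ≤ n := le_trans (le_trans (le_max_right _ _) (le_max_left _ _)) hn
    have hn0R : (0:ℝ) < n := by exact_mod_cast hn1
    set tl : ℝ := min (τ n) ((n : ℝ) ^ al) with htl_def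
    have htl0 : 0 < tl := lt_min (hτpos n) (Real.rpow_pos_of_pos hn0R al)
    set ε : ℝ := K * tl ^ (-κ) with hε_def
    have hε0 : 0 < ε := mul_pos hK0 (Real.rpow_pos_of_pos htl0 _)
    obtain ⟨G₀, hG₀N, hG₀⟩ := happrox n hnN₀ Q hQ
    have ha : Q.dF G₀ Q.bayes ≤ ε / 2 := by
      have h1 : τ n ^ (-κ) ≤ tl ^ (-κ) :=
        rpow_neg_le_rpow_neg htl0 (min_le_left _ _) hκ0.le
      have h2 : c₂ * τ n ^ (-κ) ≤ c₂ * tl ^ (-κ) := mul_le_mul_of_nonneg_left h1 hc₂.le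
      have h3 : c₂ * tl ^ (-κ) ≤ (K / 2) * tl ^ (-κ) := by
        apply mul_le_mul_of_nonneg_right _ (Real.rpow_nonneg htl0.le _)
        have := le_max_left (2 * c₂) (((c₃ + 1) / c₄) ^ (1 / q))
        rw [← hK_def] at this
        linarith
      calc Q.dF G₀ Q.bayes ≤ c₂ * τ n ^ (-κ) := hG₀
        _ ≤ (K / 2) * tl ^ (-κ) := le_trans h2 h3
        _ = ε / 2 := by rw [hε_def]; ring
    obtain ⟨B, hBmeas, hBbound, hBoff⟩ := main_bound Q (N n)
      (hmeas Q hQ n) (hmeasB Q hQ) hc₁ hκ hε0 (hnoise Q hQ n) hG₀N ha Ghat hERM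
    refine ⟨B, hBmeas, ?_, hBoff⟩
    -- measure bound
    have hcard : ((N n).card : ℝ) ≤ Real.exp (c₃ * (n : ℝ) ^ D) := by
      rcases Nat.eq_zero_or_pos (N n).card with hcz | hcz
      · rw [hcz]; exact_mod_cast (Real.exp_pos _).le
      · have hcpos : (0:ℝ) < ((N n).card : ℝ) := by exact_mod_cast hcz
        rw [← Real.exp_log hcpos]
        exact Real.exp_le_exp.2 (hent n hnN₀)
    have hεlow : K * (n : ℝ) ^ (-(al * κ)) ≤ ε := by
      apply mul_le_mul_of_nonneg_left _ hK0.le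
      have h1 : ((n:ℝ) ^ al) ^ (-κ) ≤ tl ^ (-κ) :=
        rpow_neg_le_rpow_neg htl0 (min_le_right _ _) hκ0.le
      calc (n : ℝ) ^ (-(al * κ)) = ((n:ℝ) ^ al) ^ (-κ) := by
            rw [← Real.rpow_mul hn0R.le]; ring_nf
        _ ≤ tl ^ (-κ) := h1
    have hnε : (c₃ + 1) * (n : ℝ) ^ D ≤ c₄ * ((n : ℝ) * ε ^ q) := by
      have hεq : (K * (n : ℝ) ^ (-(al * κ))) ^ q ≤ ε ^ q :=
        Real.rpow_le_rpow (by positivity) hεlow hq.le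
      have hsplit : (K * (n : ℝ) ^ (-(al * κ))) ^ q = K ^ q * (n : ℝ) ^ (-(al * κ) * q) := by
        rw [Real.mul_rpow hK0.le (Real.rpow_nonneg hn0R.le _), ← Real.rpow_mul hn0R.le]
      have hDexp : (1:ℝ) + -(al * κ) * q = D := by
        rw [hal_def, hq_def, hD_def]
        field_simp
        ring
      have hnn : (n : ℝ) * (n : ℝ) ^ (-(al * κ) * q) = (n : ℝ) ^ D := by
        calc (n : ℝ) * (n : ℝ) ^ (-(al * κ) * q)
            = (n : ℝ) ^ (1:ℝ) * (n : ℝ) ^ (-(al * κ) * q) := by rw [Real.rpow_one]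
          _ = (n : ℝ) ^ ((1:ℝ) + -(al * κ) * q) := (Real.rpow_add hn0R _ _).symm
          _ = (n : ℝ) ^ D := by rw [hDexp]
      have h5 : K ^ q * (n : ℝ) ^ D ≤ (n : ℝ) * ε ^ q := by
        calc K ^ q * (n : ℝ) ^ D = (n : ℝ) * (K ^ q * (n : ℝ) ^ (-(al * κ) * q)) := by
              rw [← hnn]; ring
          _ = (n : ℝ) * (K * (n : ℝ) ^ (-(al * κ))) ^ q := by rw [hsplit]
          _ ≤ (n : ℝ) * ε ^ q := mul_le_mul_of_nonneg_left hεq hn0R.le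
      have h6 : (c₃ + 1) * (n : ℝ) ^ D ≤ c₄ * (K ^ q * (n : ℝ) ^ D) := by
        have h7 : (c₃ + 1) ≤ c₄ * K ^ q := by
          rw [div_le_iff₀ hc₄] at hKq
          linarith [hKq]
        have h8 : (0:ℝ) ≤ (n : ℝ) ^ D := Real.rpow_nonneg hn0R.le _
        nlinarith
      calc (c₃ + 1) * (n : ℝ) ^ D ≤ c₄ * (K ^ q * (n : ℝ) ^ D) := h6
        _ ≤ c₄ * ((n : ℝ) * ε ^ q) := mul_le_mul_of_nonneg_left h5 hc₄.le
    calc ((Q.samples n) B).toReal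
        ≤ ((N n).card : ℝ) * Real.exp (-((n : ℝ) * (c₄ * ε ^ q))) := hBbound
      _ ≤ Real.exp (c₃ * (n : ℝ) ^ D) * Real.exp (-((n : ℝ) * (c₄ * ε ^ q))) :=
          mul_le_mul_of_nonneg_right hcard (Real.exp_pos _).le
      _ = Real.exp (c₃ * (n : ℝ) ^ D - (n : ℝ) * (c₄ * ε ^ q)) := by
          rw [← Real.exp_add]; ring_nf
      _ ≤ Real.exp (-(n : ℝ) ^ D) := by
          apply Real.exp_le_exp.2
          have : (n : ℝ) * (c₄ * ε ^ q) = c₄ * ((n : ℝ) * ε ^ q) := by ring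
          rw [this]
          linarith
  refine ⟨⟨K ^ p + 1, N₁, ?_⟩, ⟨((K / c₁) ^ (1 / κ)) ^ p + 1, N₁, ?_⟩⟩
  · -- dF part
    intro n hn Q hQ Ghat hERM
    haveI := samples_prob Q n
    obtain ⟨B, hBmeas, hBbound, hBoff⟩ := key n hn Q hQ Ghat hERM
    have hn1 : 1 ≤ n := le_trans (le_trans (le_max_right _ _) (le_max_left _ _)) hn
    have hnN₂ : N₂ ≤ n := le_trans (le_max_right _ _) hn
    have hn0R : (0:ℝ) < n := by exact_mod_cast hn1
    set tl : ℝ := min (τ n) ((n : ℝ) ^ al) with htl_def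
    have htl0 : 0 < tl := lt_min (hτpos n) (Real.rpow_pos_of_pos hn0R al)
    set ε : ℝ := K * tl ^ (-κ) with hε_def
    have hε0 : 0 < ε := mul_pos hK0 (Real.rpow_pos_of_pos htl0 _)
    have hrisk : clsRisk Q n Ghat ClsModel.dF p ≤ ε ^ p + ((Q.samples n) B).toReal := by
      exact integral_rpow_le (Q.samples n) (fun ω => Q.dF (Ghat ω) Q.bayes) hBmeas
        hε0.le hp (fun ω => dF_nonneg Q _ _) (fun ω => dF_le_one Q _ _) hBoff
    have hA : tl ^ (κ * p) * ε ^ p = K ^ p := by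
      rw [hε_def, Real.mul_rpow hK0.le (Real.rpow_nonneg htl0.le _),
        ← Real.rpow_mul htl0.le, mul_comm (K ^ p) _, ← mul_assoc, ← Real.rpow_add htl0,
        show κ * p + -κ * p = 0 by ring, Real.rpow_zero, one_mul]
    have hB : tl ^ (κ * p) * Real.exp (-(n : ℝ) ^ D) ≤ 1 := by
      have h1 : tl ^ (κ * p) ≤ ((n : ℝ) ^ al) ^ (κ * p) :=
        Real.rpow_le_rpow htl0.le (min_le_right _ _) (by positivity)
      have h2 : ((n : ℝ) ^ al) ^ (κ * p) = (n : ℝ) ^ (al * (κ * p)) :=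
        (Real.rpow_mul hn0R.le _ _).symm
      calc tl ^ (κ * p) * Real.exp (-(n : ℝ) ^ D)
          ≤ (n : ℝ) ^ (al * (κ * p)) * Real.exp (-(n : ℝ) ^ D) :=
            mul_le_mul_of_nonneg_right (h2 ▸ h1) (Real.exp_pos _).le
        _ ≤ 1 := hN₂ n hnN₂
    calc tl ^ (κ * p) * clsRisk Q n Ghat ClsModel.dF p
        ≤ tl ^ (κ * p) * (ε ^ p + Real.exp (-(n : ℝ) ^ D)) :=
          mul_le_mul_of_nonneg_left (le_trans hrisk (add_le_add_right hBbound _))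
            (Real.rpow_nonneg htl0.le _)
      _ = tl ^ (κ * p) * ε ^ p + tl ^ (κ * p) * Real.exp (-(n : ℝ) ^ D) := mul_add _ _ _
      _ ≤ K ^ p + 1 := by rw [hA]; exact add_le_add_right hB _
  · -- dDel part
    intro n hn Q hQ Ghat hERM
    haveI := samples_prob Q n
    obtain ⟨B, hBmeas, hBbound, hBoff⟩ := key n hn Q hQ Ghat hERM
    have hn1 : 1 ≤ n := le_trans (le_trans (le_max_right _ _) (le_max_left _ _)) hn
    have hnN₂ : N₂ ≤ n := le_trans (le_max_right _ _) hn
    have hn0R : (0:ℝ) < n := by exact_mod_cast hn1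
    have hn1R : (1:ℝ) ≤ n := by exact_mod_cast hn1
    set tl : ℝ := min (τ n) ((n : ℝ) ^ al) with htl_def
    have htl0 : 0 < tl := lt_min (hτpos n) (Real.rpow_pos_of_pos hn0R al)
    set ε : ℝ := K * tl ^ (-κ) with hε_def
    have hε0 : 0 < ε := mul_pos hK0 (Real.rpow_pos_of_pos htl0 _)
    have hGhatmem : ∀ ω, Ghat ω ∈ N n := fun ω => by exact_mod_cast (hERM ω).1
    have hBoff2 : ∀ ω, ω ∉ B → Q.dDel (Ghat ω) Q.bayes ≤ (ε / c₁) ^ (1 / κ) := fun ω hω =>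
      noise_inv hc₁ hκ0 (dDel_nonneg Q _ _)
        (le_trans (hnoise Q hQ n (Ghat ω) (hGhatmem ω)) (hBoff ω hω))
    have hc : (0:ℝ) ≤ (ε / c₁) ^ (1 / κ) := Real.rpow_nonneg (by positivity) _
    have hrisk : clsRisk Q n Ghat ClsModel.dDel p
        ≤ ((ε / c₁) ^ (1 / κ)) ^ p + ((Q.samples n) B).toReal := by
      exact integral_rpow_le (Q.samples n) (fun ω => Q.dDel (Ghat ω) Q.bayes) hBmeas
        hc hp (fun ω => dDel_nonneg Q _ _) (fun ω => dDel_le_one Q _ _) hBoff2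
    have hA : tl ^ p * ((ε / c₁) ^ (1 / κ)) ^ p = ((K / c₁) ^ (1 / κ)) ^ p := by
      have h1 : ε / c₁ = (K / c₁) * tl ^ (-κ) := by rw [hε_def]; ring
      rw [h1, Real.mul_rpow (by positivity) (Real.rpow_nonneg htl0.le _),
        ← Real.rpow_mul htl0.le,
        Real.mul_rpow (Real.rpow_nonneg (by positivity) _) (Real.rpow_nonneg htl0.le _),
        ← Real.rpow_mul htl0.le, mul_comm (((K / c₁) ^ (1 / κ)) ^ p) _, ← mul_assoc,
        ← Real.rpow_add htl0]
      have h2 : p + -κ * (1 / κ) * p = 0 := by field_simp; ring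
      rw [h2, Real.rpow_zero, one_mul]
    have hB : tl ^ p * Real.exp (-(n : ℝ) ^ D) ≤ 1 := by
      have h1 : tl ^ p ≤ ((n : ℝ) ^ al) ^ p :=
        Real.rpow_le_rpow htl0.le (min_le_right _ _) hp0.le
      have h2 : ((n : ℝ) ^ al) ^ p = (n : ℝ) ^ (al * p) := (Real.rpow_mul hn0R.le _ _).symm
      have hpκp : p ≤ κ * p := le_mul_of_one_le_left hp0.le hκ
      have h3 : (n : ℝ) ^ (al * p) ≤ (n : ℝ) ^ (al * (κ * p)) :=
        Real.rpow_le_rpow_of_exponent_le hn1R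
          (mul_le_mul_of_nonneg_left hpκp hal.le)
      calc tl ^ p * Real.exp (-(n : ℝ) ^ D)
          ≤ (n : ℝ) ^ (al * (κ * p)) * Real.exp (-(n : ℝ) ^ D) := by
            apply mul_le_mul_of_nonneg_right _ (Real.exp_pos _).le
            exact le_trans (h2 ▸ h1) h3
        _ ≤ 1 := hN₂ n hnN₂
    calc tl ^ p * clsRisk Q n Ghat ClsModel.dDel p
        ≤ tl ^ p * (((ε / c₁) ^ (1 / κ)) ^ p + Real.exp (-(n : ℝ) ^ D)) :=
          mul_le_mul_of_nonneg_left (le_trans hrisk (add_le_add_right hBbound _))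
            (Real.rpow_nonneg htl0.le _)
      _ = tl ^ p * ((ε / c₁) ^ (1 / κ)) ^ p + tl ^ p * Real.exp (-(n : ℝ) ^ D) := mul_add _ _ _
      _ ≤ ((K / c₁) ^ (1 / κ)) ^ p + 1 := by rw [hA]; exact add_le_add_right hB _
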